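/- Let L(T₁,T₂), g(T₁,T₂) ∈ Z_p[[T₁,T₂]] with p ∤ g(T₁,0), and suppose that for every power series c obtained as a remainder of Weierstrass division of L by g in (Z_p[[T₂]])[[T₁]], each coefficient c_j(T₂) ∈ Z_p[[T₂]] vanishes at ψ(T₂) = ζ − 1 for all p-power roots of unity ζ. Then g divides L in Z_p[[T₁,T₂]]. -/

import Mathlib

open PowerSeries

/-- Evaluation of a power series `c ∈ ℤ_p[[T]]` at an element `z` of a complete
nonarchimedean normed field `K` extending `ℚ_p` (convergent when `‖z‖ < 1`). -/
noncomputable def pSeriesEval (p : ℕ) [Fact p.Prime] (K : Type*) [NormedField K]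
    [CompleteSpace K] [Algebra ℚ_[p] K] (c : PowerSeries ℤ_[p]) (z : K) : K :=
  ∑' i : ℕ, algebraMap ℚ_[p] K ((PowerSeries.coeff (R := ℤ_[p]) i c : ℚ_[p])) * z ^ i

section Helpers

variable {p : ℕ} [hp : Fact p.Prime]

lemma one_lt_p_real : (1:ℝ) < p := by exact_mod_cast hp.out.one_lt

lemma p_inv_lt_one : ((p:ℝ))⁻¹ < 1 := inv_lt_one_of_one_lt₀ one_lt_p_real

lemma p_inv_pos : (0:ℝ) < (p:ℝ)⁻¹ := by
  have := one_lt_p_real (p := p); positivity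

lemma real_eq_one_of_pow {a : ℝ} (ha : 0 ≤ a) {k : ℕ} (hk : k ≠ 0) (h : a ^ k = 1) :
    a = 1 := by
  rcases lt_trichotomy a 1 with h1 | h1 | h1
  · have := pow_lt_one₀ ha h1 hk; simp [h] at this
  · exact h1
  · have := one_lt_pow₀ h1 hk; simp [h] at this

/-- discreteness of the norm on `ℤ_[p]`. -/
lemma padic_norm_lt_step {x y : ℤ_[p]} (hy : y ≠ 0) (h : ‖x‖ < ‖y‖) : ‖x‖ * p ≤ ‖y‖ := by
  rcases eq_or_ne x 0 with rfl | hx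
  · simpa using norm_nonneg y
  · rw [PadicInt.norm_eq_zpow_neg_valuation hx, PadicInt.norm_eq_zpow_neg_valuation hy] at *
    have hp1 : (1:ℝ) < p := one_lt_p_real
    have hlt : -(x.valuation : ℤ) < -(y.valuation : ℤ) := by
      exact (zpow_lt_zpow_iff_right₀ one_lt_p_real).mp h
    have hle : -(x.valuation : ℤ) + 1 ≤ -(y.valuation : ℤ) := by omega
    calc (p:ℝ) ^ (-(x.valuation : ℤ)) * p = (p:ℝ) ^ (-(x.valuation : ℤ) + 1) := by
          rw [zpow_add₀ (by positivity : (p:ℝ) ≠ 0)]; simp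
      _ ≤ (p:ℝ) ^ (-(y.valuation : ℤ)) := by
          exact zpow_le_zpow_right₀ hp1.le hle

end Helpers

section KHelpers

variable {p : ℕ} [hp : Fact p.Prime]
variable {K : Type*} [NormedField K] [CompleteSpace K] [IsUltrametricDist K] [Algebra ℚ_[p] K]

lemma normK_natCast (hnorm : ∀ x : ℚ_[p], ‖algebraMap ℚ_[p] K x‖ = ‖x‖) (N : ℕ) :
    ‖(N : K)‖ ≤ 1 := by
  rw [← map_natCast (algebraMap ℚ_[p] K), hnorm]
  have := Padic.norm_int_le_one (p := p) (N : ℤ)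
  simpa using this

lemma normK_p (hnorm : ∀ x : ℚ_[p], ‖algebraMap ℚ_[p] K x‖ = ‖x‖) :
    ‖((p : ℕ) : K)‖ = (p:ℝ)⁻¹ := by
  rw [← map_natCast (algebraMap ℚ_[p] K), hnorm]
  exact_mod_cast Padic.norm_p (p := p)

lemma normK_dvd (hnorm : ∀ x : ℚ_[p], ‖algebraMap ℚ_[p] K x‖ = ‖x‖) {N : ℕ}
    (h : p ∣ N) : ‖(N : K)‖ ≤ (p:ℝ)⁻¹ := by
  obtain ⟨k, rfl⟩ := h
  push_cast
  rw [norm_mul, normK_p hnorm]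
  calc (p:ℝ)⁻¹ * ‖(k:K)‖ ≤ (p:ℝ)⁻¹ * 1 :=
        mul_le_mul_of_nonneg_left (normK_natCast hnorm k) (p_inv_pos (p := p)).le
    _ = (p:ℝ)⁻¹ := mul_one _

/-- binomial expansion of `ζ^p - 1`. -/
lemma zeta_expand (ζ : K) :
    ζ ^ p - 1 = ((∑ i ∈ Finset.range (p - 2),
        (ζ - 1) ^ (i + 2) * ((p.choose (i + 2) : ℕ) : K)) + (ζ - 1) * p) + (ζ - 1) ^ p := by
  have h2 := hp.out.two_le
  set t := ζ - 1 with ht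
  have hζ : ζ = t + 1 := by rw [ht]; ring
  have h1 : ζ ^ p - 1 = ∑ i ∈ Finset.range p, t ^ (i + 1) * ((p.choose (i + 1) : ℕ) : K) := by
    conv_lhs => rw [hζ, add_pow]
    rw [Finset.sum_range_succ']
    simp
  obtain ⟨q, hq⟩ : ∃ q, p = q + 2 := ⟨p - 2, by omega⟩
  rw [h1, hq]
  rw [Finset.sum_range_succ, Finset.sum_range_succ']
  have hq2 : q + 2 - 2 = q := by omega
  rw [hq2]
  simp [Nat.choose_self, Nat.choose_one_right]

end KHelpers

section Estimates

variable {p : ℕ} [hp : Fact p.Prime]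
variable {K : Type*} [NormedField K] [CompleteSpace K] [IsUltrametricDist K] [Algebra ℚ_[p] K]
open IsUltrametricDist

variable (hnorm : ∀ x : ℚ_[p], ‖algebraMap ℚ_[p] K x‖ = ‖x‖)
include hnorm

/-- Norm bound for the middle part of the binomial expansion. -/
lemma middle_bound (ζ : K) (hs1 : ‖ζ - 1‖ ≤ 1) :
    ‖∑ i ∈ Finset.range (p - 2), (ζ - 1) ^ (i + 2) * ((p.choose (i + 2) : ℕ) : K)‖ ≤
      (p:ℝ)⁻¹ * ‖ζ - 1‖ ^ 2 := by
  set s := ‖ζ - 1‖ with hsdef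
  have hs0 : 0 ≤ s := norm_nonneg _
  apply norm_sum_le_of_forall_le_of_nonneg (by positivity)
  intro i hi
  rw [Finset.mem_range] at hi
  rw [norm_mul, norm_pow]
  have h1 : s ^ (i + 2) ≤ s ^ 2 := pow_le_pow_of_le_one hs0 hs1 (by omega)
  have h2 : ‖((p.choose (i + 2) : ℕ) : K)‖ ≤ (p:ℝ)⁻¹ :=
    normK_dvd hnorm (hp.out.dvd_choose_self (by omega) (by omega))
  calc s ^ (i + 2) * ‖((p.choose (i + 2) : ℕ) : K)‖ ≤ s ^ 2 * (p:ℝ)⁻¹ :=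
        mul_le_mul h1 h2 (norm_nonneg _) (by positivity)
    _ = (p:ℝ)⁻¹ * s ^ 2 := mul_comm _ _

omit hnorm in
lemma norm_sub_one_le_one {ζ : K} (hζ : ‖ζ‖ = 1) : ‖ζ - 1‖ ≤ 1 := by
  have := norm_add_le_max ζ (-1)
  simpa [hζ, sub_eq_add_neg] using this

/-- If `s^(p-1) < p⁻¹` then the term `p·t` dominates and `‖ζ^p - 1‖ = s / p`. -/
lemma dominant_pt {ζ : K} (hζ : ‖ζ‖ = 1) (hζ1 : ζ ≠ 1)
    (hs1 : ‖ζ - 1‖ < 1) (hsp : ‖ζ - 1‖ ^ (p - 1) < (p:ℝ)⁻¹) :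
    ‖ζ ^ p - 1‖ = ‖ζ - 1‖ * (p:ℝ)⁻¹ := by
  set s := ‖ζ - 1‖ with hsdef
  have hs0 : 0 < s := by
    rw [hsdef]; rw [norm_pos_iff, sub_ne_zero]; exact hζ1
  have hpt : ‖(ζ - 1) * (p:K)‖ = s * (p:ℝ)⁻¹ := by rw [norm_mul, normK_p hnorm]
  have hB : ‖∑ i ∈ Finset.range (p - 2), (ζ - 1) ^ (i + 2) * ((p.choose (i + 2) : ℕ) : K)‖ ≤
      (p:ℝ)⁻¹ * s ^ 2 := middle_bound hnorm ζ hs1.le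
  have hBlt : ‖∑ i ∈ Finset.range (p - 2), (ζ - 1) ^ (i + 2) * ((p.choose (i + 2) : ℕ) : K)‖ <
      s * (p:ℝ)⁻¹ := by
    refine hB.trans_lt ?_
    have : (p:ℝ)⁻¹ * s ^ 2 < (p:ℝ)⁻¹ * s := by
      have : s ^ 2 < s := by nlinarith
      nlinarith [p_inv_pos (p := p)]
    linarith [this]
  have h1 : ‖(∑ i ∈ Finset.range (p - 2), (ζ - 1) ^ (i + 2) * ((p.choose (i + 2) : ℕ) : K))
      + (ζ - 1) * p‖ = s * (p:ℝ)⁻¹ := by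
    rw [norm_add_eq_max_of_norm_ne_norm (by rw [hpt]; exact hBlt.ne)]
    rw [hpt]
    exact max_eq_right hBlt.le
  have htp : ‖(ζ - 1) ^ p‖ < s * (p:ℝ)⁻¹ := by
    rw [norm_pow]
    have hpe : p - 1 + 1 = p := by have := hp.out.two_le; omega
    calc s ^ p = s ^ (p - 1) * s := by rw [← pow_succ, hpe]
      _ < (p:ℝ)⁻¹ * s := by nlinarith
      _ = s * (p:ℝ)⁻¹ := mul_comm _ _
  rw [zeta_expand (p := p) ζ]
  rw [norm_add_eq_max_of_norm_ne_norm (by rw [h1]; exact htp.ne')]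
  rw [h1]
  exact max_eq_left htp.le

/-- If `p⁻¹ ≤ s^(p-1)` then `‖ζ^p - 1‖ ≤ s^p`. -/
lemma upper_sp {ζ : K} (hζ : ‖ζ‖ = 1) (hsp : (p:ℝ)⁻¹ ≤ ‖ζ - 1‖ ^ (p - 1)) :
    ‖ζ ^ p - 1‖ ≤ ‖ζ - 1‖ ^ p := by
  set s := ‖ζ - 1‖ with hsdef
  have hs0 : 0 ≤ s := norm_nonneg _
  have hs1 : s ≤ 1 := norm_sub_one_le_one hζ
  have hspe : s ^ p = s ^ (p - 1) * s := by
    rw [← pow_succ]; congr 1; have := hp.out.two_le; omega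
  have hpt : ‖(ζ - 1) * (p:K)‖ ≤ s ^ p := by
    rw [norm_mul, normK_p hnorm, hspe]
    nlinarith [p_inv_pos (p := p)]
  have hB : ‖∑ i ∈ Finset.range (p - 2), (ζ - 1) ^ (i + 2) * ((p.choose (i + 2) : ℕ) : K)‖ ≤
      s ^ p := by
    refine (middle_bound hnorm ζ hs1).trans ?_
    rw [hspe]
    have h2 : s ^ 2 ≤ s := by nlinarith
    nlinarith [p_inv_pos (p := p), pow_nonneg hs0 (p-1), pow_le_one₀ hs0 hs1 (n := p - 1)]
  have htp : ‖(ζ - 1) ^ p‖ ≤ s ^ p := by rw [norm_pow]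
  rw [zeta_expand (p := p) ζ]
  refine (norm_add_le_max _ _).trans (max_le ?_ htp)
  exact (norm_add_le_max _ _).trans (max_le hB hpt)

/-- If `‖ζ^p - 1‖ < 1` then `‖ζ - 1‖ < 1`. -/
lemma norm_lt_one_of_pow {ζ : K} (hζ : ‖ζ‖ = 1) (hw : ‖ζ ^ p - 1‖ < 1) : ‖ζ - 1‖ < 1 := by
  by_contra hs
  have hs1 : ‖ζ - 1‖ = 1 := le_antisymm (norm_sub_one_le_one hζ) (not_lt.mp hs)
  have h2 : (2:ℕ) ≤ p := hp.out.two_le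
  have hfront : ‖(∑ i ∈ Finset.range (p - 2), (ζ - 1) ^ (i + 2) * ((p.choose (i + 2) : ℕ) : K))
      + (ζ - 1) * p‖ ≤ (p:ℝ)⁻¹ := by
    refine (norm_add_le_max _ _).trans (max_le ?_ ?_)
    · have := middle_bound hnorm (p := p) ζ hs1.le
      rw [hs1] at this; simpa using this
    · rw [norm_mul, normK_p hnorm, hs1, one_mul]
  have htp : ‖(ζ - 1) ^ p‖ = 1 := by rw [norm_pow, hs1, one_pow]
  have : ‖ζ ^ p - 1‖ = 1 := by
    rw [zeta_expand (p := p) ζ, norm_add_eq_max_of_norm_ne_norm, htp]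
    · exact max_eq_right (htp ▸ hfront.trans (by linarith [p_inv_lt_one (p := p)]))
    · rw [htp]
      exact (hfront.trans_lt (p_inv_lt_one (p := p))).ne
  linarith
end Estimates

section RootBounds

variable {p : ℕ} [hp : Fact p.Prime]
variable {K : Type*} [NormedField K] [CompleteSpace K] [IsUltrametricDist K] [Algebra ℚ_[p] K]

lemma order_facts {ζ : K} {k : ℕ} (hk : k ≠ 0) (hord : orderOf ζ = p ^ k) :
    ζ ≠ 1 ∧ ‖ζ‖ = 1 := by
  constructor
  · intro h
    rw [h, orderOf_one] at hord
    have := hp.out.one_lt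
    have : 1 < p ^ k := Nat.one_lt_pow hk this
    omega
  · have h1 : ζ ^ p ^ k = 1 := hord ▸ pow_orderOf_eq_one ζ
    have h2 : ‖ζ‖ ^ p ^ k = 1 := by rw [← norm_pow, h1, norm_one]
    exact real_eq_one_of_pow (norm_nonneg _) (pow_ne_zero _ hp.out.pos.ne') h2

lemma root_bounds (hnorm : ∀ x : ℚ_[p], ‖algebraMap ℚ_[p] K x‖ = ‖x‖) :
    ∀ n : ℕ, ∀ ζ : K, orderOf ζ = p ^ (n + 1) →
      ‖ζ - 1‖ < 1 ∧ (p:ℝ)⁻¹ ≤ ‖ζ - 1‖ ^ (p - 1) ∧ (p:ℝ)⁻¹ ≤ ‖ζ - 1‖ ^ (p ^ n * (p - 1)) := by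
  intro n
  induction n with
  | zero =>
    intro ζ hord
    obtain ⟨hζ1, hζn⟩ := order_facts (k := 1) one_ne_zero (by simpa using hord)
    have hzp : ζ ^ p = 1 := by
      have := pow_orderOf_eq_one ζ
      rwa [hord, pow_one] at this
    have hw : ‖ζ ^ p - 1‖ < 1 := by rw [hzp]; simp
    have hs1 : ‖ζ - 1‖ < 1 := norm_lt_one_of_pow hnorm hζn hw
    have hlow : (p:ℝ)⁻¹ ≤ ‖ζ - 1‖ ^ (p - 1) := by
      by_contra h
      push_neg at h
      have := dominant_pt hnorm hζn hζ1 hs1 h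
      rw [hzp] at this
      simp only [sub_self, norm_zero] at this
      have hs0 : 0 < ‖ζ - 1‖ := by rw [norm_pos_iff, sub_ne_zero]; exact hζ1
      nlinarith [p_inv_pos (p := p)]
    exact ⟨hs1, hlow, by simpa using hlow⟩
  | succ n ih =>
    intro ζ hord
    obtain ⟨hζ1, hζn⟩ := order_facts (k := n + 2) (by omega) hord
    have hpne : p ≠ 0 := hp.out.pos.ne'
    have hordp : orderOf (ζ ^ p) = p ^ (n + 1) := by
      rw [orderOf_pow' ζ hpne, hord,
        Nat.gcd_eq_right (dvd_pow_self p (by omega : n + 2 ≠ 0)), pow_succ,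
        Nat.mul_div_cancel _ hp.out.pos]
    obtain ⟨hw1, hwp, hwφ⟩ := ih (ζ ^ p) hordp
    have hs1 : ‖ζ - 1‖ < 1 := norm_lt_one_of_pow hnorm hζn (by
      have : ‖ζ ^ p - 1‖ < 1 := hw1
      exact this)
    have hs0 : 0 < ‖ζ - 1‖ := by rw [norm_pos_iff, sub_ne_zero]; exact hζ1
    have hlow : (p:ℝ)⁻¹ ≤ ‖ζ - 1‖ ^ (p - 1) := by
      by_contra h
      push_neg at h
      have hdom := dominant_pt hnorm hζn hζ1 hs1 h
      have hcontr : ‖ζ ^ p - 1‖ ^ (p - 1) < (p:ℝ)⁻¹ := by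
        rw [hdom, mul_pow]
        have h1 : ‖ζ - 1‖ ^ (p - 1) < (p:ℝ)⁻¹ := h
        have h2 : ((p:ℝ)⁻¹) ^ (p - 1) ≤ 1 :=
          pow_le_one₀ (p_inv_pos (p := p)).le (p_inv_lt_one (p := p)).le
        nlinarith [pow_nonneg (norm_nonneg (ζ - 1)) (p - 1), p_inv_pos (p := p),
          pow_pos (p_inv_pos (p := p)) (p - 1)]
      exact absurd hwp (by linarith)
    have hupper : ‖ζ ^ p - 1‖ ≤ ‖ζ - 1‖ ^ p := upper_sp hnorm hζn hlow
    refine ⟨hs1, hlow, ?_⟩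
    have h1 : ‖ζ ^ p - 1‖ ^ (p ^ n * (p - 1)) ≤ (‖ζ - 1‖ ^ p) ^ (p ^ n * (p - 1)) :=
      pow_le_pow_left₀ (norm_nonneg _) hupper _
    calc (p:ℝ)⁻¹ ≤ ‖ζ ^ p - 1‖ ^ (p ^ n * (p - 1)) := hwφ
      _ ≤ (‖ζ - 1‖ ^ p) ^ (p ^ n * (p - 1)) := h1
      _ = ‖ζ - 1‖ ^ (p ^ (n + 1) * (p - 1)) := by
          rw [← pow_mul]; ring_nf

end RootBounds

section MainB

variable {p : ℕ} [hp : Fact p.Prime]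
variable {K : Type*} [NormedField K] [CompleteSpace K] [IsUltrametricDist K] [Algebra ℚ_[p] K]

lemma padic_norm_toNat_val {x : ℤ_[p]} (hx : x ≠ 0) :
    ‖x‖ = ((p:ℝ)⁻¹) ^ x.valuation := by
  have h1 : ((p:ℝ)⁻¹) ^ x.valuation = (p:ℝ) ^ (-(x.valuation : ℤ)) := by
    rw [zpow_neg, zpow_natCast, inv_pow]
  rw [PadicInt.norm_eq_zpow_neg_valuation hx, h1]

lemma padic_discrete_step {x : ℤ_[p]} {ν : ℕ} (h : ‖x‖ < ((p:ℝ)⁻¹) ^ ν) :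
    ‖x‖ ≤ ((p:ℝ)⁻¹) ^ (ν + 1) := by
  have hppos : (0:ℝ) < p := by have := one_lt_p_real (p := p); linarith
  have hy : ((p:ℤ_[p]) ^ ν) ≠ 0 := by
    apply pow_ne_zero
    intro hcon
    have := PadicInt.norm_p (p := p)
    rw [hcon, norm_zero] at this
    have := p_inv_pos (p := p)
    linarith
  have hny : ‖(p:ℤ_[p]) ^ ν‖ = ((p:ℝ)⁻¹) ^ ν := by
    rw [PadicInt.norm_p_pow, zpow_neg, zpow_natCast, inv_pow]
  have hlt2 : ‖x‖ < ‖(p:ℤ_[p]) ^ ν‖ := by rw [hny]; exact h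
  have := padic_norm_lt_step hy hlt2
  rw [hny] at this
  calc ‖x‖ = ‖x‖ * p * (p:ℝ)⁻¹ := by field_simp
    _ ≤ ((p:ℝ)⁻¹) ^ ν * (p:ℝ)⁻¹ := by
        apply mul_le_mul_of_nonneg_right this (by positivity)
    _ = ((p:ℝ)⁻¹) ^ (ν + 1) := by rw [pow_succ]

lemma coeff_eq_zero_of_vanish
    (hnorm : ∀ x : ℚ_[p], ‖algebraMap ℚ_[p] K x‖ = ‖x‖)
    (hroots : ∀ n : ℕ, ∃ ζ : K, orderOf ζ = p ^ n)
    (c : PowerSeries ℤ_[p])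
    (hv : ∀ ζ : K, (∃ n : ℕ, ζ ^ p ^ n = 1) → pSeriesEval p K c (ζ - 1) = 0) :
    c = 0 := by
  classical
  by_contra hc0
  have hex0 : ∃ j, PowerSeries.coeff (R := ℤ_[p]) j c ≠ 0 := by
    by_contra h
    push_neg at h
    exact hc0 (PowerSeries.ext fun n => by rw [h n, map_zero])
  obtain ⟨j₀, hj₀⟩ := hex0
  have hex : ∃ k : ℕ, ∃ j, ((p:ℝ)⁻¹) ^ k ≤ ‖PowerSeries.coeff (R := ℤ_[p]) j c‖ :=
    ⟨(PowerSeries.coeff (R := ℤ_[p]) j₀ c).valuation, j₀, (padic_norm_toNat_val hj₀).ge⟩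
  set μ := Nat.find hex with hμdef
  have hμ : ∃ j, ((p:ℝ)⁻¹) ^ μ ≤ ‖PowerSeries.coeff (R := ℤ_[p]) j c‖ := Nat.find_spec hex
  have hub : ∀ j, ‖PowerSeries.coeff (R := ℤ_[p]) j c‖ ≤ ((p:ℝ)⁻¹) ^ μ := by
    intro j
    rcases Nat.eq_zero_or_pos μ with h0 | hpos
    · rw [h0, pow_zero]; exact PadicInt.norm_le_one _
    · obtain ⟨ν, hν⟩ := Nat.exists_eq_add_of_lt hpos
      have hno := Nat.find_min hex (m := μ - 1) (by omega)
      push_neg at hno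
      have := padic_discrete_step (hno j)
      have hμe : μ - 1 + 1 = μ := by omega
      rwa [hμe] at this
  set d := Nat.find hμ with hddef
  have hd : ((p:ℝ)⁻¹) ^ μ ≤ ‖PowerSeries.coeff (R := ℤ_[p]) d c‖ := Nat.find_spec hμ
  have heq : ‖PowerSeries.coeff (R := ℤ_[p]) d c‖ = ((p:ℝ)⁻¹) ^ μ := le_antisymm (hub d) hd
  have hlow : ∀ j < d, ‖PowerSeries.coeff (R := ℤ_[p]) j c‖ ≤ ((p:ℝ)⁻¹) ^ (μ + 1) := fun j hj =>
    padic_discrete_step (lt_of_not_ge (Nat.find_min hμ hj))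
  -- choose the root of unity
  obtain ⟨ζ, hord⟩ := hroots (d + 1)
  obtain ⟨hs1, _, hsφ⟩ := root_bounds hnorm d ζ hord
  obtain ⟨hζ1, hζn⟩ := order_facts (k := d + 1) (by omega) hord
  set s := ‖ζ - 1‖ with hsdef
  have hs0 : 0 < s := by rw [hsdef, norm_pos_iff, sub_ne_zero]; exact hζ1
  have hsd : (p:ℝ)⁻¹ < s ^ d := by
    have hdlt : d < p ^ d * (p - 1) := by
      have h1 : d < p ^ d := Nat.lt_pow_self (n := d) hp.out.one_lt
      have h2 : 1 ≤ p - 1 := by have := hp.out.two_le; omega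
      calc d < p ^ d := h1
        _ = p ^ d * 1 := (mul_one _).symm
        _ ≤ p ^ d * (p - 1) := Nat.mul_le_mul_left _ h2
    calc (p:ℝ)⁻¹ ≤ s ^ (p ^ d * (p - 1)) := hsφ
      _ < s ^ d := pow_lt_pow_right_of_lt_one₀ hs0 hs1 hdlt
  -- evaluation
  have hzeta : ζ ^ p ^ (d + 1) = 1 := hord ▸ pow_orderOf_eq_one ζ
  have hE : pSeriesEval p K c (ζ - 1) = 0 := hv ζ ⟨d + 1, hzeta⟩
  set f : ℕ → K := fun i =>
    algebraMap ℚ_[p] K ((PowerSeries.coeff (R := ℤ_[p]) i c : ℚ_[p])) * (ζ - 1) ^ i with hfdef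
  have hfnorm : ∀ i, ‖f i‖ = ‖PowerSeries.coeff (R := ℤ_[p]) i c‖ * s ^ i := by
    intro i
    rw [hfdef]
    simp only
    rw [norm_mul, norm_pow, hnorm, ← PadicInt.norm_def]
  have hsum : Summable f := by
    apply Summable.of_norm_bounded (g := fun i => s ^ i)
      (summable_geometric_of_lt_one hs0.le hs1)
    intro i
    rw [hfnorm i]
    exact mul_le_of_le_one_left (pow_nonneg hs0.le i) (PadicInt.norm_le_one _)
  have hE' : f d + (∑' i, if i = d then 0 else f i) = 0 := by
    rw [← Summable.tsum_eq_add_tsum_ite hsum d]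
    exact hE
  have hfd : ‖f d‖ = ((p:ℝ)⁻¹) ^ μ * s ^ d := by rw [hfnorm d, heq]
  have hB : ‖∑' i, if i = d then 0 else f i‖ ≤
      max (((p:ℝ)⁻¹) ^ (μ + 1)) (((p:ℝ)⁻¹) ^ μ * s ^ (d + 1)) := by
    apply IsUltrametricDist.norm_tsum_le_of_forall_le_of_nonneg
      (le_max_of_le_left (by positivity))
    intro i
    rcases eq_or_ne i d with rfl | hi
    · have h0 : ‖(if d = d then (0:K) else f d)‖ = 0 := by simp
      rw [h0]
      exact le_max_of_le_left (pow_nonneg (inv_nonneg.mpr (Nat.cast_nonneg p)) _)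
    · rw [if_neg hi, hfnorm i]
      rcases lt_or_gt_of_ne hi with hlt | hgt
      · refine le_max_of_le_left ?_
        calc ‖PowerSeries.coeff (R := ℤ_[p]) i c‖ * s ^ i ≤ ((p:ℝ)⁻¹) ^ (μ + 1) * 1 := by
              apply mul_le_mul (hlow i hlt) (pow_le_one₀ hs0.le hs1.le) (by positivity)
                (by positivity)
          _ = ((p:ℝ)⁻¹) ^ (μ + 1) := mul_one _
      · refine le_max_of_le_right ?_
        apply mul_le_mul (hub i) (pow_le_pow_of_le_one hs0.le hs1.le hgt) (by positivity)
          (by positivity)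
  have hcontr : ‖f d‖ ≤ max (((p:ℝ)⁻¹) ^ (μ + 1)) (((p:ℝ)⁻¹) ^ μ * s ^ (d + 1)) := by
    have : f d = -(∑' i, if i = d then 0 else f i) := eq_neg_of_add_eq_zero_left hE'
    rw [this, norm_neg]
    exact hB
  have hlt : max (((p:ℝ)⁻¹) ^ (μ + 1)) (((p:ℝ)⁻¹) ^ μ * s ^ (d + 1)) < ‖f d‖ := by
    rw [hfd]
    apply max_lt
    · rw [pow_succ]
      have := pow_pos (p_inv_pos (p := p)) μ
      nlinarith
    · rw [pow_succ, ← mul_assoc]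
      have h2 : (0:ℝ) < ((p:ℝ))⁻¹ ^ μ * s ^ d :=
        mul_pos (pow_pos (p_inv_pos (p := p)) μ) (pow_pos hs0 d)
      nlinarith
  linarith

end MainB

section PartA

variable {p : ℕ} [hp : Fact p.Prime]

/-- Mixed valuation bound: `‖coeff j f‖ ≤ p^j · p^{-k}`. -/
def Vq (p : ℕ) [Fact p.Prime] (k : ℕ) (f : PowerSeries ℤ_[p]) : Prop :=
  ∀ j : ℕ, ‖PowerSeries.coeff (R := ℤ_[p]) j f‖ ≤ (p:ℝ) ^ j * ((p:ℝ)⁻¹) ^ k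

lemma Vq_zero (f : PowerSeries ℤ_[p]) : Vq p 0 f := by
  intro j
  rw [pow_zero, mul_one]
  calc ‖PowerSeries.coeff (R := ℤ_[p]) j f‖ ≤ 1 := PadicInt.norm_le_one _
    _ ≤ (p:ℝ) ^ j := one_le_pow₀ (by exact_mod_cast hp.out.one_lt.le)

lemma Vq_sum {ι : Type*} {s : Finset ι} {F : ι → PowerSeries ℤ_[p]} {k : ℕ}
    (h : ∀ x ∈ s, Vq p k (F x)) : Vq p k (∑ x ∈ s, F x) := by
  intro j
  rw [map_sum]
  apply IsUltrametricDist.norm_sum_le_of_forall_le_of_nonneg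
  · have : (0:ℝ) < p := by exact_mod_cast hp.out.pos
    positivity
  · exact fun x hx => h x hx j

lemma Vq_mul {a b : ℕ} {f g : PowerSeries ℤ_[p]} (hf : Vq p a f) (hg : Vq p b g) :
    Vq p (a + b) (f * g) := by
  intro j
  rw [PowerSeries.coeff_mul]
  have hppos : (0:ℝ) < p := by exact_mod_cast hp.out.pos
  apply IsUltrametricDist.norm_sum_le_of_forall_le_of_nonneg (by positivity)
  intro x hx
  rw [Finset.HasAntidiagonal.mem_antidiagonal] at hx
  rw [norm_mul]
  calc ‖PowerSeries.coeff (R := ℤ_[p]) x.1 f‖ * ‖PowerSeries.coeff (R := ℤ_[p]) x.2 g‖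
      ≤ ((p:ℝ) ^ x.1 * ((p:ℝ)⁻¹) ^ a) * ((p:ℝ) ^ x.2 * ((p:ℝ)⁻¹) ^ b) :=
        mul_le_mul (hf x.1) (hg x.2) (norm_nonneg _) (by positivity)
    _ = (p:ℝ) ^ (x.1 + x.2) * ((p:ℝ)⁻¹) ^ (a + b) := by rw [pow_add, pow_add]; ring
    _ = (p:ℝ) ^ j * ((p:ℝ)⁻¹) ^ (a + b) := by rw [hx]

lemma Vq_maximal {f : PowerSeries ℤ_[p]}
    (h : f ∈ IsLocalRing.maximalIdeal (PowerSeries ℤ_[p])) : Vq p 1 f := by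
  have hppos : (0:ℝ) < p := by exact_mod_cast hp.out.pos
  have hp1 : (1:ℝ) ≤ p := by exact_mod_cast hp.out.one_lt.le
  intro j
  rcases Nat.eq_zero_or_pos j with rfl | hj
  · rw [pow_zero, one_mul, pow_one]
    have hnu : ¬IsUnit f := h
    have hcc : ¬IsUnit (PowerSeries.constantCoeff (R := ℤ_[p]) f) := by
      intro hc
      exact hnu (PowerSeries.isUnit_iff_constantCoeff.mpr hc)
    have hne1 : ‖PowerSeries.constantCoeff (R := ℤ_[p]) f‖ ≠ 1 := fun hc =>
      hcc (PadicInt.isUnit_iff.mpr hc)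
    have hlt : ‖PowerSeries.constantCoeff (R := ℤ_[p]) f‖ < 1 :=
      lt_of_le_of_ne (PadicInt.norm_le_one _) hne1
    have hstep := padic_norm_lt_step (x := PowerSeries.constantCoeff (R := ℤ_[p]) f)
      (y := 1) one_ne_zero (by simpa using hlt)
    rw [norm_one] at hstep
    have : ‖PowerSeries.coeff (R := ℤ_[p]) 0 f‖ = ‖PowerSeries.constantCoeff (R := ℤ_[p]) f‖ := by
      rw [PowerSeries.coeff_zero_eq_constantCoeff]
    rw [this]
    calc ‖PowerSeries.constantCoeff (R := ℤ_[p]) f‖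
        = ‖PowerSeries.constantCoeff (R := ℤ_[p]) f‖ * p * (p:ℝ)⁻¹ := by field_simp
      _ ≤ 1 * (p:ℝ)⁻¹ := mul_le_mul_of_nonneg_right hstep (by positivity)
      _ = (p:ℝ)⁻¹ := one_mul _
  · calc ‖PowerSeries.coeff (R := ℤ_[p]) j f‖ ≤ 1 := PadicInt.norm_le_one _
      _ ≤ (p:ℝ) ^ j * ((p:ℝ)⁻¹) ^ 1 := by
          rw [pow_one]
          have h1 : (p:ℝ) ^ 1 ≤ (p:ℝ) ^ j := pow_le_pow_right₀ hp1 hj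
          rw [pow_one] at h1
          calc (1:ℝ) = p * (p:ℝ)⁻¹ := by field_simp
            _ ≤ (p:ℝ) ^ j * (p:ℝ)⁻¹ := mul_le_mul_of_nonneg_right h1 (by positivity)
end PartA

section PartA2

variable {p : ℕ} [hp : Fact p.Prime]

/-- Iteration for Weierstrass division: `H 0 = τ L`, `H (k+1) = τ (H k · Q)` where
`τ` shifts down by `m` in the outer variable. -/
noncomputable def wdH (p : ℕ) [Fact p.Prime] (m : ℕ)
    (Q L : PowerSeries (PowerSeries ℤ_[p])) : ℕ → PowerSeries (PowerSeries ℤ_[p])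
  | 0 => PowerSeries.mk fun i => PowerSeries.coeff (R := PowerSeries ℤ_[p]) (i + m) L
  | (k+1) => PowerSeries.mk fun i =>
      PowerSeries.coeff (R := PowerSeries ℤ_[p]) (i + m) (wdH p m Q L k * Q)

lemma wdH_zero {m : ℕ} {Q L : PowerSeries (PowerSeries ℤ_[p])} :
    wdH p m Q L 0 = PowerSeries.mk
      (fun i => PowerSeries.coeff (R := PowerSeries ℤ_[p]) (i + m) L) := rfl

lemma wdH_succ {m : ℕ} {Q L : PowerSeries (PowerSeries ℤ_[p])} (k : ℕ) :
    wdH p m Q L (k + 1) = PowerSeries.mk (fun i =>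
      PowerSeries.coeff (R := PowerSeries ℤ_[p]) (i + m) (wdH p m Q L k * Q)) := rfl

lemma wdH_bound {m : ℕ} {Q L : PowerSeries (PowerSeries ℤ_[p])}
    (hQ : ∀ i, Vq p 1 (PowerSeries.coeff (R := PowerSeries ℤ_[p]) i Q)) :
    ∀ k i, Vq p k (PowerSeries.coeff (R := PowerSeries ℤ_[p]) i (wdH p m Q L k)) := by
  intro k
  induction k with
  | zero =>
    intro i
    rw [wdH_zero, PowerSeries.coeff_mk]
    exact Vq_zero _
  | succ k ih =>
    intro i
    rw [wdH_succ, PowerSeries.coeff_mk, PowerSeries.coeff_mul]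
    apply Vq_sum
    intro x hx
    exact Vq_mul (ih x.1) (hQ x.2)

lemma wdH_summable {m : ℕ} {Q L : PowerSeries (PowerSeries ℤ_[p])}
    (hQ : ∀ i, Vq p 1 (PowerSeries.coeff (R := PowerSeries ℤ_[p]) i Q)) (i j : ℕ) :
    Summable fun k => PowerSeries.coeff (R := ℤ_[p]) j
      (PowerSeries.coeff (R := PowerSeries ℤ_[p]) i (wdH p m Q L k)) := by
  have hppos : (0:ℝ) < p := by exact_mod_cast hp.out.pos
  apply Summable.of_norm_bounded (g := fun k => (p:ℝ) ^ j * ((p:ℝ)⁻¹) ^ k)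
  · exact (summable_geometric_of_lt_one (by positivity) (p_inv_lt_one (p := p))).mul_left _
  · intro k
    exact wdH_bound hQ k i j

lemma tsum_double_sum {A B : Finset (ℕ × ℕ)}
    (a : ℕ → ℕ → ℕ → ℤ_[p]) (q : ℕ → ℕ → ℤ_[p])
    (ha : ∀ x y, Summable fun k => a k x y) :
    ∑ x ∈ A, ∑ y ∈ B, (∑' k, a k x.1 y.1) * q x.2 y.2 =
      ∑' k, ∑ x ∈ A, ∑ y ∈ B, a k x.1 y.1 * q x.2 y.2 := by
  have h1 : ∀ x : ℕ × ℕ, ∑ y ∈ B, (∑' k, a k x.1 y.1) * q x.2 y.2 =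
      ∑' k, ∑ y ∈ B, a k x.1 y.1 * q x.2 y.2 := by
    intro x
    calc ∑ y ∈ B, (∑' k, a k x.1 y.1) * q x.2 y.2
        = ∑ y ∈ B, ∑' k, a k x.1 y.1 * q x.2 y.2 :=
          Finset.sum_congr rfl fun y _ =>
            (Summable.tsum_mul_right _ (ha x.1 y.1)).symm
      _ = ∑' k, ∑ y ∈ B, a k x.1 y.1 * q x.2 y.2 :=
          (Summable.tsum_finsetSum (f := fun (y : ℕ × ℕ) k => a k x.1 y.1 * q x.2 y.2)
            fun y _ => (ha x.1 y.1).mul_right _).symm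
  calc ∑ x ∈ A, ∑ y ∈ B, (∑' k, a k x.1 y.1) * q x.2 y.2
      = ∑ x ∈ A, ∑' k, ∑ y ∈ B, a k x.1 y.1 * q x.2 y.2 :=
        Finset.sum_congr rfl fun x _ => h1 x
    _ = ∑' k, ∑ x ∈ A, ∑ y ∈ B, a k x.1 y.1 * q x.2 y.2 :=
        (Summable.tsum_finsetSum (f := fun (x : ℕ × ℕ) k => ∑ y ∈ B, a k x.1 y.1 * q x.2 y.2)
          fun x _ => summable_sum (f := fun (y : ℕ × ℕ) k => a k x.1 y.1 * q x.2 y.2)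
            fun y _ => (ha x.1 y.1).mul_right _).symm

set_option maxHeartbeats 1000000 in
/-- Weierstrass division, existence of the quotient:  the remainder
`L - h·(X^m - Q)` has vanishing coefficients in degrees `≥ m`. -/
lemma weierstrass_remainder (m : ℕ) (L Q : PowerSeries (PowerSeries ℤ_[p]))
    (hQ : ∀ i, Vq p 1 (PowerSeries.coeff (R := PowerSeries ℤ_[p]) i Q)) :
    ∃ h : PowerSeries (PowerSeries ℤ_[p]), ∀ i,
      PowerSeries.coeff (R := PowerSeries ℤ_[p]) (i + m)
        (L - h * (PowerSeries.X ^ m - Q)) = 0 := by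
  classical
  set a : ℕ → ℕ → ℕ → ℤ_[p] := fun k x c =>
    PowerSeries.coeff (R := ℤ_[p]) c (PowerSeries.coeff (R := PowerSeries ℤ_[p]) x (wdH p m Q L k))
    with hadef
  set q : ℕ → ℕ → ℤ_[p] := fun x c =>
    PowerSeries.coeff (R := ℤ_[p]) c (PowerSeries.coeff (R := PowerSeries ℤ_[p]) x Q) with hqdef
  have hsml : ∀ x y : ℕ, Summable fun k => a k x y := fun x y => wdH_summable hQ x y
  set h : PowerSeries (PowerSeries ℤ_[p]) := PowerSeries.mk fun i => PowerSeries.mk fun j =>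
    ∑' k, a k i j with hhdef
  have hcoeff : ∀ i j, PowerSeries.coeff (R := ℤ_[p]) j (PowerSeries.coeff (R := PowerSeries ℤ_[p]) i h) =
      ∑' k, a k i j := by
    intro i j
    rw [hhdef, PowerSeries.coeff_mk, PowerSeries.coeff_mk]
  have key : ∀ i, PowerSeries.coeff (R := PowerSeries ℤ_[p]) (i + m) L
      + PowerSeries.coeff (R := PowerSeries ℤ_[p]) (i + m) (h * Q)
      = PowerSeries.coeff (R := PowerSeries ℤ_[p]) i h := by
    intro i
    apply PowerSeries.ext
    intro j
    have hhq : PowerSeries.coeff (R := ℤ_[p]) j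
        (PowerSeries.coeff (R := PowerSeries ℤ_[p]) (i + m) (h * Q)) =
        ∑' k, PowerSeries.coeff (R := ℤ_[p]) j
          (PowerSeries.coeff (R := PowerSeries ℤ_[p]) (i + m) (wdH p m Q L k * Q)) := by
      have e1 : PowerSeries.coeff (R := ℤ_[p]) j
          (PowerSeries.coeff (R := PowerSeries ℤ_[p]) (i + m) (h * Q)) =
          ∑ x ∈ Finset.HasAntidiagonal.antidiagonal (i + m), ∑ y ∈ Finset.HasAntidiagonal.antidiagonal j,
            (∑' k, a k x.1 y.1) * q x.2 y.2 := by
        rw [PowerSeries.coeff_mul, map_sum]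
        refine Finset.sum_congr rfl fun x _ => ?_
        rw [PowerSeries.coeff_mul]
        exact Finset.sum_congr rfl fun y _ => by rw [hcoeff]
      have e2 : ∀ k : ℕ, PowerSeries.coeff (R := ℤ_[p]) j
          (PowerSeries.coeff (R := PowerSeries ℤ_[p]) (i + m) (wdH p m Q L k * Q)) =
          ∑ x ∈ Finset.HasAntidiagonal.antidiagonal (i + m), ∑ y ∈ Finset.HasAntidiagonal.antidiagonal j,
            a k x.1 y.1 * q x.2 y.2 := by
        intro k
        rw [PowerSeries.coeff_mul, map_sum]
        exact Finset.sum_congr rfl fun x _ => PowerSeries.coeff_mul _ _ _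
      rw [e1, tsum_double_sum a q hsml]
      exact tsum_congr fun k => (e2 k).symm
    rw [map_add, hhq, hcoeff i j]
    have hshift : ∀ k : ℕ, PowerSeries.coeff (R := ℤ_[p]) j
        (PowerSeries.coeff (R := PowerSeries ℤ_[p]) (i + m) (wdH p m Q L k * Q)) =
        a (k + 1) i j := by
      intro k
      simp only [hadef]
      conv_rhs => rw [wdH_succ, PowerSeries.coeff_mk]
    rw [tsum_congr hshift, Summable.tsum_eq_zero_add (hsml i j)]
    have h0 : a 0 i j =
        PowerSeries.coeff (R := ℤ_[p]) j (PowerSeries.coeff (R := PowerSeries ℤ_[p]) (i + m) L) := by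
      simp only [hadef]
      conv_lhs => rw [wdH_zero, PowerSeries.coeff_mk]
    rw [h0]
  refine ⟨h, fun i => ?_⟩
  rw [map_sub, mul_sub, map_sub, PowerSeries.coeff_mul_X_pow h m i]
  rw [← key i]
  ring

end PartA2


/-- Greenberg's criterion: Let `L, g ∈ ℤ_p[[T₁,T₂]] = R[[T₁]]` with
`R = ℤ_p[[T₂]]`, and suppose `p ∤ g(T₁,0)`, so that `g` is a unit `u` times a
distinguished polynomial `P` of degree `m` over `R`.  If for every Weierstrass division
`L = h·g + r` with `deg_{T₁} r < m`, each coefficient `c_j(T₂)` of the remainder `r`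
vanishes at `T₂ = ζ − 1` for every `p`-power root of unity `ζ`, then `g` divides `L`
in `ℤ_p[[T₁,T₂]]`. -/
theorem greenberg_divisibility_criterion (p : ℕ) [Fact p.Prime]
    (K : Type*) [NormedField K] [CompleteSpace K] [IsUltrametricDist K] [Algebra ℚ_[p] K]
    (hnorm : ∀ x : ℚ_[p], ‖algebraMap ℚ_[p] K x‖ = ‖x‖)
    (hroots : ∀ n : ℕ, ∃ ζ : K, orderOf ζ = p ^ n)
    (L g : PowerSeries (PowerSeries ℤ_[p]))
    (hg : ¬ ((p : PowerSeries ℤ_[p]) ∣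
      PowerSeries.map (PowerSeries.constantCoeff (R := ℤ_[p])) g))
    (m : ℕ) (u : (PowerSeries (PowerSeries ℤ_[p]))ˣ)
    (P : Polynomial (PowerSeries ℤ_[p]))
    (hP : P.Monic) (hPdeg : P.natDegree = m)
    (hPdist : ∀ i < m, P.coeff i ∈ IsLocalRing.maximalIdeal (PowerSeries ℤ_[p]))
    (hgP : g = (u : PowerSeries (PowerSeries ℤ_[p])) * (P : PowerSeries (PowerSeries ℤ_[p])))
    (hvanish : ∀ (h : PowerSeries (PowerSeries ℤ_[p])) (r : Polynomial (PowerSeries ℤ_[p])),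
      r.degree < m → L = h * g + (r : PowerSeries (PowerSeries ℤ_[p])) →
      ∀ (j : ℕ) (ζ : K), (∃ n : ℕ, ζ ^ p ^ n = 1) →
        pSeriesEval p K (r.coeff j) (ζ - 1) = 0) :
    g ∣ L := by
  classical
  have hPm : P.coeff m = 1 := by rw [← hPdeg]; exact hP.coeff_natDegree
  have hQ : ∀ i, Vq p 1 (PowerSeries.coeff (R := PowerSeries ℤ_[p]) i
      (PowerSeries.X ^ m - (P : PowerSeries (PowerSeries ℤ_[p])))) := by
    intro i
    rw [map_sub, PowerSeries.coeff_X_pow, Polynomial.coeff_coe]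
    rcases lt_trichotomy i m with him | rfl | him
    · rw [if_neg him.ne, zero_sub]
      exact Vq_maximal (neg_mem (hPdist i him))
    · rw [if_pos rfl, hPm, sub_self]
      intro j
      rw [map_zero, norm_zero]
      have : (0:ℝ) < p := by exact_mod_cast (Fact.out : p.Prime).pos
      positivity
    · rw [if_neg him.ne', Polynomial.coeff_eq_zero_of_natDegree_lt (hPdeg ▸ him), sub_self]
      intro j
      rw [map_zero, norm_zero]
      have : (0:ℝ) < p := by exact_mod_cast (Fact.out : p.Prime).pos
      positivity
  obtain ⟨h, hrem⟩ := weierstrass_remainder m L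
    (PowerSeries.X ^ m - (P : PowerSeries (PowerSeries ℤ_[p]))) hQ
  have hXQ : PowerSeries.X ^ m -
      (PowerSeries.X ^ m - (P : PowerSeries (PowerSeries ℤ_[p]))) =
      (P : PowerSeries (PowerSeries ℤ_[p])) := by ring
  rw [hXQ] at hrem
  set r : PowerSeries (PowerSeries ℤ_[p]) :=
    L - h * (P : PowerSeries (PowerSeries ℤ_[p])) with hrdef
  set rp : Polynomial (PowerSeries ℤ_[p]) := PowerSeries.trunc m r with hrpdef
  have hrp : (rp : PowerSeries (PowerSeries ℤ_[p])) = r := by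
    apply PowerSeries.ext
    intro n
    rw [Polynomial.coeff_coe, hrpdef, PowerSeries.coeff_trunc]
    split_ifs with hn
    · rfl
    · push_neg at hn
      obtain ⟨i, rfl⟩ := Nat.exists_eq_add_of_le hn
      rw [add_comm m i]
      exact (hrem i).symm
  have hdeg : rp.degree < (m : WithBot ℕ) := PowerSeries.degree_trunc_lt r m
  have hu : ((u⁻¹ : (PowerSeries (PowerSeries ℤ_[p]))ˣ) : PowerSeries (PowerSeries ℤ_[p])) *
      (u : PowerSeries (PowerSeries ℤ_[p])) = 1 := u.inv_mul
  have hsplit : L = (h * ((u⁻¹ : (PowerSeries (PowerSeries ℤ_[p]))ˣ) :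
      PowerSeries (PowerSeries ℤ_[p]))) * g + (rp : PowerSeries (PowerSeries ℤ_[p])) := by
    rw [hrp, hgP, hrdef]
    have : (h * ((u⁻¹ : (PowerSeries (PowerSeries ℤ_[p]))ˣ) : PowerSeries (PowerSeries ℤ_[p])))
        * ((u : PowerSeries (PowerSeries ℤ_[p])) * (P : PowerSeries (PowerSeries ℤ_[p]))) =
        h * (P : PowerSeries (PowerSeries ℤ_[p])) := by
      calc (h * ((u⁻¹ : (PowerSeries (PowerSeries ℤ_[p]))ˣ) : PowerSeries (PowerSeries ℤ_[p])))
          * ((u : PowerSeries (PowerSeries ℤ_[p])) * (P : PowerSeries (PowerSeries ℤ_[p])))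
          = h * ((((u⁻¹ : (PowerSeries (PowerSeries ℤ_[p]))ˣ) : PowerSeries (PowerSeries ℤ_[p]))
              * (u : PowerSeries (PowerSeries ℤ_[p]))) * (P : PowerSeries (PowerSeries ℤ_[p])))
            := by ring
        _ = h * (P : PowerSeries (PowerSeries ℤ_[p])) := by rw [hu, one_mul]
    rw [this]
    ring
  have hvan := hvanish _ rp hdeg hsplit
  have hrp0 : rp = 0 := by
    apply Polynomial.ext
    intro j
    rw [Polynomial.coeff_zero]
    exact coeff_eq_zero_of_vanish hnorm hroots (rp.coeff j) (fun ζ hζ => hvan j ζ hζ)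
  refine ⟨h * ((u⁻¹ : (PowerSeries (PowerSeries ℤ_[p]))ˣ) : PowerSeries (PowerSeries ℤ_[p])), ?_⟩
  rw [hsplit, hrp0]
  push_cast
  ring
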